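/- For every real number β > 0, sinh(β)·(1 + cosh(β)) < cosh(β)^3. -/
import Mathlib

theorem stmt_2 (β : ℝ) (hβ : 0 < β) :
    Real.sinh β * (1 + Real.cosh β) < Real.cosh β ^ 3 := by
  have hs : 0 < Real.sinh β := Real.sinh_pos_iff.2 hβ
  have hc : 1 ≤ Real.cosh β := Real.one_le_cosh β
  have hsq : Real.cosh β ^ 2 - Real.sinh β ^ 2 = 1 := Real.cosh_sq_sub_sinh_sq β
  nlinarith [sq_nonneg (Real.cosh β - Real.sinh β), sq_nonneg (Real.cosh β * Real.sinh β - 1), sq_nonneg (Real.cosh β ^ 2 - Real.sinh β * Real.cosh β - 1), mul_pos hs (Real.cosh_pos (x := β)), sq_nonneg (Real.cosh β - 1)]
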